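/- Let Ψ ∈ J_d(n,k) be a map-jet whose linear part has one-dimensional kernel, and suppose γ, γ' are regular d-jets of curves in ℂⁿ with Ψ∘γ = 0 and Ψ∘γ' = 0. Then there exists a d-jet of reparametrization δ ∈ Diff_d(1) with γ' = γ∘δ. -/

import Mathlib

open Polynomial Finset

namespace Stmt10Aux

lemma pow_coeff_small (r : Polynomial ℂ) (hr0 : r.coeff 0 = 0) (e m : ℕ) (h : m < e) :
    (r ^ e).coeff m = 0 := by
  obtain ⟨q, hq⟩ := pow_dvd_pow_of_dvd (Polynomial.X_dvd_iff.mpr hr0) e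
  rw [hq, Polynomial.coeff_mul]
  apply Finset.sum_eq_zero
  intro ab hab
  rw [Finset.HasAntidiagonal.mem_antidiagonal] at hab
  have : ab.1 ≠ e := by omega
  simp [Polynomial.coeff_X_pow, this]

lemma coeff_eq_zero_of_X_pow_dvd (q : Polynomial ℂ) (N l : ℕ) (h : (X:ℂ[X])^N ∣ q)
    (hl : l < N) : q.coeff l = 0 := by
  obtain ⟨r, hr⟩ := h
  rw [hr, Polynomial.coeff_mul]
  apply Finset.sum_eq_zero
  intro ab hab
  rw [Finset.HasAntidiagonal.mem_antidiagonal] at hab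
  have : ab.1 ≠ N := by omega
  simp [Polynomial.coeff_X_pow, this]

lemma pow_ext_low (p : Polynomial ℂ) (a : ℂ) (M : ℕ)
    (e l : ℕ) (hl : l < M) :
    ((p + C a * X ^ M) ^ e).coeff l = (p ^ e).coeff l := by
  have hdvd : (X:ℂ[X])^M ∣ (p + C a * X ^ M) ^ e - p ^ e := by
    have h2 : (p + C a * X ^ M) ^ e - p ^ e
        = (∑ i ∈ range e, (p + C a * X ^ M) ^ i * p ^ (e - 1 - i)) * (C a * X ^ M) := by
      have := geom_sum₂_mul (p + C a * X ^ M) p e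
      rw [← this]; ring_nf
    rw [h2]
    exact Dvd.dvd.mul_left (dvd_mul_left _ _) _
  have := coeff_eq_zero_of_X_pow_dvd _ M l hdvd hl
  rw [Polynomial.coeff_sub] at this
  linear_combination this

lemma pow_ext_high (p : Polynomial ℂ) (hp0 : p.coeff 0 = 0) (a : ℂ) (M : ℕ) (hM : 1 ≤ M)
    (e : ℕ) (he : 2 ≤ e) :
    ((p + C a * X ^ M) ^ e).coeff M = (p ^ e).coeff M := by
  set p' := p + C a * X ^ M with hp'
  have hp'0 : p'.coeff 0 = 0 := by
    rw [hp', Polynomial.coeff_add, hp0, Polynomial.coeff_C_mul, Polynomial.coeff_X_pow,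
      if_neg (by omega), mul_zero, zero_add]
  have hS0 : (∑ i ∈ range e, p' ^ i * p ^ (e - 1 - i)).coeff 0 = 0 := by
    rw [Polynomial.finset_sum_coeff]
    apply Finset.sum_eq_zero
    intro i hi
    rw [Finset.mem_range] at hi
    rw [Polynomial.mul_coeff_zero]
    by_cases h0 : i = 0
    · subst h0
      rw [pow_coeff_small p hp0 (e-1-0) 0 (by omega), mul_zero]
    · rw [pow_coeff_small p' hp'0 i 0 (by omega), zero_mul]
  have hdvd : (X:ℂ[X])^(M+1) ∣ p' ^ e - p ^ e := by
    have h2 : p' ^ e - p ^ e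
        = (∑ i ∈ range e, p' ^ i * p ^ (e - 1 - i)) * (C a * X ^ M) := by
      have := geom_sum₂_mul p' p e
      rw [← this, hp']; ring
    rw [h2, pow_succ']
    exact mul_dvd_mul (Polynomial.X_dvd_iff.mpr hS0) (dvd_mul_left _ _)
  have := coeff_eq_zero_of_X_pow_dvd _ (M+1) M hdvd (by omega)
  rw [Polynomial.coeff_sub] at this
  linear_combination this

lemma comp_curve_coeff (d : ℕ) (c : ℕ → ℂ) (p : Polynomial ℂ) (l : ℕ) :
    ((∑ m' ∈ Finset.Icc 1 d, C (c m') * X ^ m').comp p).coeff l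
      = ∑ m' ∈ Finset.Icc 1 d, c m' * (p ^ m').coeff l := by
  rw [Polynomial.sum_comp, Polynomial.finset_sum_coeff]
  apply Finset.sum_congr rfl
  intro m' _
  rw [Polynomial.mul_comp, Polynomial.C_comp, Polynomial.X_pow_comp, Polynomial.coeff_C_mul]

lemma curve_coeff (d : ℕ) (v : ℕ → ℂ) (l : ℕ) :
    (∑ m' ∈ Finset.Icc 1 d, Polynomial.C (v m') * Polynomial.X ^ m').coeff l
      = if l ∈ Finset.Icc 1 d then v l else 0 := by
  rw [Polynomial.finset_sum_coeff]
  simp only [Polynomial.coeff_C_mul, Polynomial.coeff_X_pow, mul_ite, mul_one, mul_zero]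
  rw [Finset.sum_ite_eq]

lemma comp_coeff_zero (Q r : Polynomial ℂ) (d : ℕ) (hQ0 : Q.coeff 0 = 0)
    (hQ : ∀ l ∈ Finset.Icc 1 d, Q.coeff l = 0) (hr0 : r.coeff 0 = 0)
    (m : ℕ) (hmd : m ≤ d) : (Q.comp r).coeff m = 0 := by
  rw [Polynomial.comp_eq_sum_left, Polynomial.sum_def, Polynomial.finset_sum_coeff]
  apply Finset.sum_eq_zero
  intro e _
  rw [Polynomial.coeff_C_mul]
  by_cases hed : e ≤ d
  · by_cases he0 : e = 0
    · rw [he0, hQ0, zero_mul]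
    · rw [hQ e (Finset.mem_Icc.mpr ⟨by omega, hed⟩), zero_mul]
  · rw [pow_coeff_small r hr0 e m (by omega), mul_zero]

lemma coeff_zero_aeval {n : ℕ} (f : Fin n → Polynomial ℂ)
    (hf0 : ∀ i, (f i).coeff 0 = 0) (p : MvPolynomial (Fin n) ℂ) :
    (MvPolynomial.aeval f p).coeff 0 = MvPolynomial.coeff 0 p := by
  induction p using MvPolynomial.induction_on with
  | C a => simp
  | add p q hp hq => simp [hp, hq]
  | mul_X p i hp =>
      rw [map_mul, MvPolynomial.aeval_X, Polynomial.mul_coeff_zero, hf0 i, mul_zero]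
      classical
      rw [MvPolynomial.coeff_mul_X']
      simp

lemma aeval_agree {n : ℕ} (f g : Fin n → Polynomial ℂ)
    (hf0 : ∀ i, (f i).coeff 0 = 0) (hg0 : ∀ i, (g i).coeff 0 = 0)
    (m : ℕ) (hagr : ∀ i, ∀ l < m, (f i).coeff l = (g i).coeff l)
    (p : MvPolynomial (Fin n) ℂ) :
    ∀ l < m, (MvPolynomial.aeval f p).coeff l = (MvPolynomial.aeval g p).coeff l := by
  induction p using MvPolynomial.induction_on with
  | C a => intro l _; simp
  | add p q hp hq => intro l hl; simp [hp l hl, hq l hl]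
  | mul_X p i hp =>
      intro l hl
      rw [map_mul, map_mul, MvPolynomial.aeval_X, MvPolynomial.aeval_X,
        Polynomial.coeff_mul, Polynomial.coeff_mul]
      apply Finset.sum_congr rfl
      intro ab hab
      rw [Finset.HasAntidiagonal.mem_antidiagonal] at hab
      by_cases hb : ab.2 = 0
      · rw [hb, hf0 i, hg0 i, mul_zero, mul_zero]
      · rw [hp ab.1 (by omega), hagr i ab.2 (by omega)]

lemma aeval_lin {n : ℕ} (f g : Fin n → Polynomial ℂ)
    (hf0 : ∀ i, (f i).coeff 0 = 0) (hg0 : ∀ i, (g i).coeff 0 = 0)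
    (m : ℕ) (hm : 1 ≤ m)
    (hagr : ∀ i, ∀ l < m, (f i).coeff l = (g i).coeff l)
    (p : MvPolynomial (Fin n) ℂ) :
    (MvPolynomial.aeval f p).coeff m = (MvPolynomial.aeval g p).coeff m
      + ∑ i, MvPolynomial.coeff (Finsupp.single i 1) p
          * ((f i).coeff m - (g i).coeff m) := by
  classical
  induction p using MvPolynomial.induction_on with
  | C a =>
      have h1 : ∀ i : Fin n, MvPolynomial.coeff (Finsupp.single i 1)
          (MvPolynomial.C a : MvPolynomial (Fin n) ℂ) = 0 := by
        intro i
        rw [MvPolynomial.coeff_C]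
        rw [if_neg (fun h => one_ne_zero (Finsupp.single_eq_zero.mp h.symm))]
      simp only [MvPolynomial.aeval_C, h1, zero_mul, Finset.sum_const_zero, add_zero]
  | add p q hp hq =>
      simp only [map_add, Polynomial.coeff_add, MvPolynomial.coeff_add, add_mul,
        Finset.sum_add_distrib, hp, hq]
      ring
  | mul_X p i0 hp =>
      rw [map_mul, map_mul, MvPolynomial.aeval_X, MvPolynomial.aeval_X]
      have hsum : ∑ i, MvPolynomial.coeff (Finsupp.single i 1) (p * MvPolynomial.X i0)
            * ((f i).coeff m - (g i).coeff m)
          = MvPolynomial.coeff 0 p * ((f i0).coeff m - (g i0).coeff m) := by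
        rw [Finset.sum_eq_single i0]
        · rw [MvPolynomial.coeff_mul_X']
          simp [Finsupp.support_single_ne_zero _ (one_ne_zero : (1:ℕ) ≠ 0)]
        · intro i _ hi
          rw [MvPolynomial.coeff_mul_X']
          have : i0 ∉ (Finsupp.single i 1).support := by
            rw [Finsupp.support_single_ne_zero _ (one_ne_zero : (1:ℕ) ≠ 0)]
            simp [Ne.symm hi]
          simp [this, Ne.symm hi]
        · intro h; exact absurd (Finset.mem_univ i0) h
      rw [hsum]
      have hA0 : (MvPolynomial.aeval f p).coeff 0 = MvPolynomial.coeff 0 p :=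
        coeff_zero_aeval f hf0 p
      have hB0 : (MvPolynomial.aeval g p).coeff 0 = MvPolynomial.coeff 0 p :=
        coeff_zero_aeval g hg0 p
      have key : ((MvPolynomial.aeval f p) * f i0).coeff m
          - ((MvPolynomial.aeval g p) * g i0).coeff m
          = MvPolynomial.coeff 0 p * ((f i0).coeff m - (g i0).coeff m) := by
        rw [Polynomial.coeff_mul, Polynomial.coeff_mul, ← Finset.sum_sub_distrib]
        rw [Finset.sum_eq_single_of_mem ((0:ℕ), m) (by rw [Finset.HasAntidiagonal.mem_antidiagonal]; omega)]
        · rw [hA0, hB0]; ring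
        · intro ab hab hne
          rw [Finset.HasAntidiagonal.mem_antidiagonal] at hab
          by_cases hb : ab.2 = 0
          · rw [hb, hf0 i0, hg0 i0, mul_zero, mul_zero, sub_zero]
          · have ha : ab.1 ≠ 0 := fun h0 => hne (Prod.ext h0 (by omega))
            have h1 : ab.1 < m := by omega
            rw [aeval_agree f g hf0 hg0 m hagr p ab.1 h1, hagr i0 ab.2 (by omega), sub_self]
      linear_combination key

/-- The key linear-algebra step: if `γ'` agrees with `γ ∘ r` below degree `m`,
then the degree-`m` discrepancy lies in the kernel of the linear part of `Ψ`. -/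
lemma key_step {n k : ℕ} (d : ℕ) (Ψ : Fin k → MvPolynomial (Fin n) ℂ)
    (hconst : ∀ j, MvPolynomial.coeff 0 (Ψ j) = 0)
    (γ γ' : ℕ → Fin n → ℂ)
    (hsol : ∀ j, ∀ m ∈ Finset.Icc 1 d,
      (MvPolynomial.aeval
          (fun i : Fin n =>
            ∑ m' ∈ Finset.Icc 1 d, Polynomial.C (γ m' i) * Polynomial.X ^ m')
          (Ψ j)).coeff m = 0)
    (hsol' : ∀ j, ∀ m ∈ Finset.Icc 1 d,
      (MvPolynomial.aeval
          (fun i : Fin n =>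
            ∑ m' ∈ Finset.Icc 1 d, Polynomial.C (γ' m' i) * Polynomial.X ^ m')
          (Ψ j)).coeff m = 0)
    (r : Polynomial ℂ) (hr0 : r.coeff 0 = 0)
    (m : ℕ) (hm1 : 1 ≤ m) (hmd : m ≤ d)
    (hpt : ∀ l, 1 ≤ l → l < m → ∀ i, γ' l i
        = ((∑ m' ∈ Finset.Icc 1 d, C (γ m' i) * X ^ m').comp r).coeff l) :
    ∀ j, (∑ i, MvPolynomial.coeff (Finsupp.single i 1) (Ψ j) *
      (γ' m i - ((∑ m' ∈ Finset.Icc 1 d, C (γ m' i) * X ^ m').comp r).coeff m)) = 0 := by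
  intro j
  set f : Fin n → Polynomial ℂ :=
    fun i => ∑ m' ∈ Finset.Icc 1 d, C (γ' m' i) * X ^ m' with hf
  set g : Fin n → Polynomial ℂ :=
    fun i => (∑ m' ∈ Finset.Icc 1 d, C (γ m' i) * X ^ m').comp r with hg
  have hf0 : ∀ i, (f i).coeff 0 = 0 := by
    intro i; rw [hf]; rw [curve_coeff]; simp
  have hreval : r.eval 0 = 0 := by
    rw [← Polynomial.coeff_zero_eq_eval_zero]; exact hr0
  have hg0 : ∀ i, (g i).coeff 0 = 0 := by
    intro i
    rw [hg]
    rw [Polynomial.coeff_zero_eq_eval_zero, Polynomial.eval_comp, hreval,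
      ← Polynomial.coeff_zero_eq_eval_zero, curve_coeff]
    simp
  have hagr : ∀ i, ∀ l < m, (f i).coeff l = (g i).coeff l := by
    intro i l hl
    by_cases hl0 : l = 0
    · rw [hl0, hf0, hg0]
    · rw [hf]
      rw [curve_coeff, if_pos (Finset.mem_Icc.mpr ⟨by omega, by omega⟩)]
      exact hpt l (by omega) hl i
  have hlin := aeval_lin f g hf0 hg0 m hm1 hagr (Ψ j)
  have hfs : (MvPolynomial.aeval f (Ψ j)).coeff m = 0 :=
    hsol' j m (Finset.mem_Icc.mpr ⟨hm1, hmd⟩)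
  have hgs : (MvPolynomial.aeval g (Ψ j)).coeff m = 0 := by
    have hcompeq : MvPolynomial.aeval g (Ψ j)
        = (MvPolynomial.aeval
            (fun i : Fin n => ∑ m' ∈ Finset.Icc 1 d, C (γ m' i) * X ^ m') (Ψ j)).comp r := by
      rw [Polynomial.comp_eq_aeval, MvPolynomial.comp_aeval_apply]
      congr 1
    rw [hcompeq]
    apply comp_coeff_zero _ _ d _ (hsol j) hr0 m hmd
    rw [coeff_zero_aeval]
    · exact hconst j
    · intro i; rw [curve_coeff]; simp
  have hfm : ∀ i, (f i).coeff m = γ' m i := by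
    intro i; rw [hf, curve_coeff, if_pos (Finset.mem_Icc.mpr ⟨hm1, hmd⟩)]
  rw [hfs, hgs, zero_add] at hlin
  refine Eq.trans (Finset.sum_congr rfl fun i _ => ?_) hlin.symm
  rw [hfm i]

end Stmt10Aux
theorem stmt_10 (n k d : ℕ) (hd : 1 ≤ d)
    (Ψ : Fin k → MvPolynomial (Fin n) ℂ)
    (hdeg : ∀ j, (Ψ j).totalDegree ≤ d)
    (hconst : ∀ j, MvPolynomial.coeff 0 (Ψ j) = 0)
    (hker : ∃ w₀ : Fin n → ℂ, w₀ ≠ 0 ∧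
      {w : Fin n → ℂ |
          ∀ j, (∑ i, MvPolynomial.coeff (Finsupp.single i 1) (Ψ j) * w i) = 0}
        = {w : Fin n → ℂ | ∃ a : ℂ, w = a • w₀})
    (γ γ' : ℕ → Fin n → ℂ)
    (hγ0 : γ 0 = 0) (hγ'0 : γ' 0 = 0)
    (hγ1 : γ 1 ≠ 0) (hγ'1 : γ' 1 ≠ 0)
    (hγd : ∀ m, d < m → γ m = 0) (hγ'd : ∀ m, d < m → γ' m = 0)
    (hsol : ∀ j, ∀ m ∈ Finset.Icc 1 d,
      (MvPolynomial.aeval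
          (fun i : Fin n =>
            ∑ m' ∈ Finset.Icc 1 d, Polynomial.C (γ m' i) * Polynomial.X ^ m')
          (Ψ j)).coeff m = 0)
    (hsol' : ∀ j, ∀ m ∈ Finset.Icc 1 d,
      (MvPolynomial.aeval
          (fun i : Fin n =>
            ∑ m' ∈ Finset.Icc 1 d, Polynomial.C (γ' m' i) * Polynomial.X ^ m')
          (Ψ j)).coeff m = 0) :
    ∃ δ : ℕ → ℂ, δ 0 = 0 ∧ δ 1 ≠ 0 ∧ (∀ m, d < m → δ m = 0) ∧
      ∀ m ∈ Finset.Icc 1 d,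
        γ' m = ∑ i ∈ Finset.Icc 1 d,
          (PowerSeries.coeff m ((PowerSeries.mk δ) ^ i)) • γ i := by
  classical
  open Polynomial Stmt10Aux in
  obtain ⟨w₀, hw₀ne, hkerset⟩ := hker
  have hmem : ∀ w : Fin n → ℂ,
      (∀ j, (∑ i, MvPolynomial.coeff (Finsupp.single i 1) (Ψ j) * w i) = 0)
        ↔ ∃ a : ℂ, w = a • w₀ :=
    fun w => Set.ext_iff.mp hkerset w
  -- the curve composed with the zero reparametrization has vanishing coefficients
  have hz : ∀ (c : ℕ → Fin n → ℂ) (i : Fin n) (l : ℕ), 1 ≤ l →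
      ((∑ m' ∈ Finset.Icc 1 d, Polynomial.C (c m' i) * Polynomial.X ^ m').comp
        (0 : Polynomial ℂ)).coeff l = 0 := by
    intro c i l hl
    rw [comp_curve_coeff]
    apply Finset.sum_eq_zero
    intro e he
    rw [Finset.mem_Icc] at he
    rw [zero_pow (by omega : e ≠ 0)]
    simp
  -- the linear coefficients of both curves lie in the kernel
  have hγ1ker : ∃ a : ℂ, γ 1 = a • w₀ := by
    apply (hmem (γ 1)).mp
    intro j
    have := key_step d Ψ hconst γ γ hsol hsol (0 : Polynomial ℂ) (by simp) 1 le_rfl hd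
      (fun l h1 h2 i => by omega) j
    have h2 : ∀ i : Fin n, γ 1 i -
        ((∑ m' ∈ Finset.Icc 1 d, Polynomial.C (γ m' i) * Polynomial.X ^ m').comp
          (0 : Polynomial ℂ)).coeff 1 = γ 1 i := by
      intro i; rw [hz γ i 1 le_rfl, sub_zero]
    rw [Finset.sum_congr rfl (fun i _ => by rw [h2 i])] at this
    exact this
  have hγ'1ker : ∃ a : ℂ, γ' 1 = a • w₀ := by
    apply (hmem (γ' 1)).mp
    intro j
    have := key_step d Ψ hconst γ γ' hsol hsol' (0 : Polynomial ℂ) (by simp) 1 le_rfl hd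
      (fun l h1 h2 i => by omega) j
    have h2 : ∀ i : Fin n, γ' 1 i -
        ((∑ m' ∈ Finset.Icc 1 d, Polynomial.C (γ m' i) * Polynomial.X ^ m').comp
          (0 : Polynomial ℂ)).coeff 1 = γ' 1 i := by
      intro i; rw [hz γ i 1 le_rfl, sub_zero]
    rw [Finset.sum_congr rfl (fun i _ => by rw [h2 i])] at this
    exact this
  obtain ⟨aγ, haγ⟩ := hγ1ker
  obtain ⟨b, hb⟩ := hγ'1ker
  have haγne : aγ ≠ 0 := by
    intro h; apply hγ1; rw [haγ, h, zero_smul]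
  have hbne : b ≠ 0 := by
    intro h; apply hγ'1; rw [hb, h, zero_smul]
  -- main induction: build the reparametrization polynomial degree by degree
  have IND : ∀ m : ℕ, ∃ p : Polynomial ℂ, p.coeff 0 = 0 ∧ p.coeff 1 ≠ 0 ∧
      (∀ l, m + 1 < l → p.coeff l = 0) ∧ (∀ l, d < l → p.coeff l = 0) ∧
      ∀ l, 1 ≤ l → l ≤ m + 1 → l ≤ d → ∀ i0, γ' l i0 =
        ((∑ m' ∈ Finset.Icc 1 d, Polynomial.C (γ m' i0) * Polynomial.X ^ m').comp p).coeff l := by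
    intro m
    induction m with
    | zero =>
        set c : ℂ := b / aγ with hc
        have hc1 : (Polynomial.C c * Polynomial.X).coeff 1 = c := by
          rw [Polynomial.coeff_C_mul, Polynomial.coeff_X, if_pos rfl, mul_one]
        refine ⟨Polynomial.C c * Polynomial.X, by simp,
          by rw [hc1, hc]; exact div_ne_zero hbne haγne, ?_, ?_, ?_⟩
        · intro l hl
          rw [Polynomial.coeff_C_mul, Polynomial.coeff_X, if_neg (by omega), mul_zero]
        · intro l hl
          rw [Polynomial.coeff_C_mul, Polynomial.coeff_X, if_neg (by omega), mul_zero]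
        · intro l h1 h2 h3 i0
          have hl1 : l = 1 := by omega
          subst hl1
          rw [comp_curve_coeff]
          rw [Finset.sum_eq_single_of_mem 1 (Finset.mem_Icc.mpr ⟨le_rfl, hd⟩)]
          · rw [pow_one, Polynomial.coeff_C_mul, Polynomial.coeff_X, if_pos rfl, mul_one]
            have e1 : γ' 1 i0 = b * w₀ i0 := by rw [hb]; rfl
            have e2 : γ 1 i0 = aγ * w₀ i0 := by rw [haγ]; rfl
            rw [e1, e2, hc]
            field_simp
          · intro e he hne
            rw [Finset.mem_Icc] at he
            rw [pow_coeff_small _ (by simp) e 1 (by omega), mul_zero]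
    | succ m ih =>
        obtain ⟨p, hp0, hp1, hpsupp, hpd, hpl⟩ := ih
        by_cases hcase : d ≤ m + 1
        · exact ⟨p, hp0, hp1, fun l hl => hpsupp l (by omega), hpd,
            fun l h1 h2 h3 i0 => hpl l h1 (by omega) h3 i0⟩
        · have hm2d : m + 2 ≤ d := by omega
          have hker2 := key_step d Ψ hconst γ γ' hsol hsol' p hp0 (m + 2) (by omega) hm2d
            (fun l h1 h2 i => hpl l h1 (by omega) (by omega) i)
          obtain ⟨a, ha⟩ := (hmem _).mp hker2
          set a' : ℂ := a / aγ with ha'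
          refine ⟨p + Polynomial.C a' * Polynomial.X ^ (m + 2), ?_, ?_, ?_, ?_, ?_⟩
          · rw [Polynomial.coeff_add, hp0, Polynomial.coeff_C_mul, Polynomial.coeff_X_pow,
              if_neg (by omega), mul_zero, zero_add]
          · rw [Polynomial.coeff_add, Polynomial.coeff_C_mul, Polynomial.coeff_X_pow,
              if_neg (by omega), mul_zero, add_zero]
            exact hp1
          · intro l hl
            rw [Polynomial.coeff_add, hpsupp l (by omega), Polynomial.coeff_C_mul,
              Polynomial.coeff_X_pow, if_neg (by omega), mul_zero, zero_add]
          · intro l hl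
            rw [Polynomial.coeff_add, hpd l hl, Polynomial.coeff_C_mul,
              Polynomial.coeff_X_pow, if_neg (by omega), mul_zero, zero_add]
          · intro l h1 h2 h3 i0
            by_cases hlow : l ≤ m + 1
            · rw [comp_curve_coeff]
              rw [Finset.sum_congr rfl
                (fun e _ => by rw [pow_ext_low p a' (m + 2) e l (by omega)])]
              rw [← comp_curve_coeff]
              exact hpl l h1 hlow h3 i0
            · have hl2 : l = m + 2 := by omega
              subst hl2
              rw [comp_curve_coeff]
              have hsplit : ∀ e ∈ Finset.Icc 1 d,
                  γ e i0 * ((p + Polynomial.C a' * Polynomial.X ^ (m + 2)) ^ e).coeff (m + 2)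
                    = γ e i0 * (p ^ e).coeff (m + 2)
                      + (if e = 1 then γ 1 i0 * a' else 0) := by
                intro e he
                rw [Finset.mem_Icc] at he
                by_cases he1 : e = 1
                · subst he1
                  rw [if_pos rfl, pow_one, pow_one, Polynomial.coeff_add,
                    Polynomial.coeff_C_mul, Polynomial.coeff_X_pow, if_pos rfl, mul_one]
                  ring
                · rw [if_neg he1, pow_ext_high p hp0 a' (m + 2) (by omega) e (by omega),
                    add_zero]
              rw [Finset.sum_congr rfl hsplit, Finset.sum_add_distrib,
                Finset.sum_ite_eq' (Finset.Icc 1 d) 1 (fun _ => γ 1 i0 * a'),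
                if_pos (Finset.mem_Icc.mpr ⟨le_rfl, hd⟩)]
              have hha := congrFun ha i0
              rw [comp_curve_coeff] at hha
              have e2 : γ 1 i0 = aγ * w₀ i0 := by rw [haγ]; rfl
              have e3 : (a • w₀) i0 = a * w₀ i0 := rfl
              rw [e3] at hha
              rw [e2, ha']
              field_simp at hha ⊢
              linear_combination hha
  obtain ⟨p, hp0, hp1, _, hpd, hpl⟩ := IND d
  refine ⟨fun l => p.coeff l, hp0, hp1, fun m hm => hpd m hm, ?_⟩
  intro m hm
  rw [Finset.mem_Icc] at hm
  have hmk : PowerSeries.mk (fun l => p.coeff l) = (p : PowerSeries ℂ) := by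
    ext nn
    rw [PowerSeries.coeff_mk, Polynomial.coeff_coe]
  funext i0
  have hcomp := hpl m hm.1 (by omega) hm.2 i0
  rw [comp_curve_coeff] at hcomp
  rw [hcomp]
  rw [Finset.sum_apply]
  apply Finset.sum_congr rfl
  intro e _
  rw [Pi.smul_apply, smul_eq_mul, hmk, ← Polynomial.coe_pow, Polynomial.coeff_coe, mul_comm]
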